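/- Let R be a commutative strongly ℤ-graded ring with grading 𝒜, let k ∈ ℤ, and let Q be an R-module. Then the 𝒜 0-linear map Q ⊗[𝒜 0] 𝒜 k → Q given by x ⊗ r ↦ r • x is bijective, where Q is regarded as an 𝒜 0-module by restriction of scalars. -/

import Mathlib

open TensorProduct

/-- A ℤ-graded ring is *strongly graded* if `𝒜 i * 𝒜 j = 𝒜 (i + j)` for all `i j`. -/
def IsStronglyGraded {R : Type*} [Ring R] (𝒜 : ℤ → Submodule ℤ R) : Prop :=
  ∀ i j : ℤ, 𝒜 i * 𝒜 j = 𝒜 (i + j)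

variable {R : Type*} [CommRing R] (𝒜 : ℤ → Submodule ℤ R) [GradedRing 𝒜]

/-- The homogeneous component `𝒜 n` is a module over the subring `𝒜 0`,
with the action given by multiplication in `R`. -/
instance gradeLeftModule (n : ℤ) : Module (𝒜 0) (𝒜 n) where
  smul a x := ⟨(a : R) * x, by simpa using SetLike.mul_mem_graded a.2 x.2⟩
  one_smul x := Subtype.ext (one_mul _)
  mul_smul a b x := Subtype.ext (mul_assoc _ _ _)
  smul_zero a := Subtype.ext (mul_zero _)
  smul_add a x y := Subtype.ext (mul_add _ _ _)
  add_smul a b x := Subtype.ext (add_mul _ _ _)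
  zero_smul x := Subtype.ext (zero_mul _)

/-- The inclusion of the subring `𝒜 0` into `R`. -/
def incl0 : (𝒜 0) →+* R where
  toFun a := (a : R)
  map_one' := rfl
  map_mul' _ _ := rfl
  map_zero' := rfl
  map_add' _ _ := rfl

/-- Every `R`-module is a module over `𝒜 0` by restriction of scalars along
the inclusion `𝒜 0 → R`. -/
instance restrictGradeZeroModule (Q : Type*) [AddCommMonoid Q] [Module R Q] :
    Module (𝒜 0) Q :=
  Module.compHom Q (incl0 𝒜)

lemma grade_smul_coe {n : ℤ} (c : 𝒜 0) (r : 𝒜 n) : ((c • r : 𝒜 n) : R) = (c : R) * r := rfl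

lemma restrict_smul_def {Q : Type*} [AddCommMonoid Q] [Module R Q] (c : 𝒜 0) (x : Q) :
    c • x = (c : R) • x := rfl


lemma exists_one_decomp (h : IsStronglyGraded 𝒜) (k : ℤ) :
    ∃ l : List (𝒜 k × 𝒜 (-k)),
      (l.map fun p => (⟨(p.1 : R) * (p.2 : R), by
        simpa using SetLike.mul_mem_graded p.1.2 p.2.2⟩ : 𝒜 0)).sum = 1 := by
  have h1 : (1 : R) ∈ 𝒜 k * 𝒜 (-k) := by
    rw [h k (-k), add_neg_cancel]
    exact SetLike.one_mem_graded 𝒜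
  have key : ∀ s ∈ 𝒜 k * 𝒜 (-k), ∃ l : List (𝒜 k × 𝒜 (-k)),
      ((l.map fun p => ((p.1 : R) * (p.2 : R))).sum) = s := by
    intro s hs
    refine Submodule.mul_induction_on hs ?_ ?_
    · intro m hm n hn
      exact ⟨[(⟨m, hm⟩, ⟨n, hn⟩)], by simp⟩
    · rintro x y ⟨l1, h1⟩ ⟨l2, h2⟩
      exact ⟨l1 ++ l2, by simp [h1, h2]⟩
  obtain ⟨l, hl⟩ := key 1 h1
  refine ⟨l, Subtype.ext ?_⟩
  have hc : ∀ m : List (𝒜 k × 𝒜 (-k)),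
      (((m.map fun p => (⟨(p.1 : R) * (p.2 : R), by
        simpa using SetLike.mul_mem_graded p.1.2 p.2.2⟩ : 𝒜 0)).sum : 𝒜 0) : R)
        = (m.map fun p => ((p.1 : R) * (p.2 : R))).sum := by
    intro m
    induction m with
    | nil => rfl
    | cons p t ih => simp [ih]
  rw [hc, hl]
  rfl

/-- For a commutative strongly ℤ-graded ring and `Q` an `R`-module, the
`𝒜 0`-linear map `Q ⊗[𝒜 0] 𝒜 k → Q`, `x ⊗ r ↦ r • x`, is bijective. -/
theorem tensor_grade_to_module_bijective (h : IsStronglyGraded 𝒜) (k : ℤ)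
    (Q : Type*) [AddCommGroup Q] [Module R Q]
    (g : (Q ⊗[𝒜 0] 𝒜 k) →ₗ[𝒜 0] Q)
    (hg : ∀ (x : Q) (r : 𝒜 k), g (x ⊗ₜ r) = (r : R) • x) :
    Function.Bijective g := by
  obtain ⟨l, hl⟩ := exists_one_decomp 𝒜 h k
  -- generic list lemmas
  have genG : ∀ (m : List (𝒜 k × 𝒜 (-k))) (x : Q),
      g ((m.map fun p => ((p.2 : R) • x) ⊗ₜ[𝒜 0] p.1).sum)
        = (((m.map fun p => (⟨(p.1 : R) * (p.2 : R), by
            simpa using SetLike.mul_mem_graded p.1.2 p.2.2⟩ : 𝒜 0)).sum : 𝒜 0) : R) • x := by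
    intro m x
    induction m with
    | nil => simp
    | cons p t ih =>
      simp only [List.map_cons, List.sum_cons, map_add, ih, hg]
      rw [smul_smul, Submodule.coe_add, add_smul]
  have genAdd : ∀ (m : List (𝒜 k × 𝒜 (-k))) (x y : Q),
      (m.map fun p => ((p.2 : R) • (x + y)) ⊗ₜ[𝒜 0] p.1).sum
        = (m.map fun p => ((p.2 : R) • x) ⊗ₜ[𝒜 0] p.1).sum
          + (m.map fun p => ((p.2 : R) • y) ⊗ₜ[𝒜 0] p.1).sum := by
    intro m x y
    induction m with
    | nil => simp
    | cons p t ih =>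
      simp only [List.map_cons, List.sum_cons]
      rw [ih, smul_add, add_tmul]
      try abel
  have step : ∀ (m : List (𝒜 k × 𝒜 (-k))) (x : Q) (r : 𝒜 k),
      (m.map fun p => ((p.2 : R) • ((r : R) • x)) ⊗ₜ[𝒜 0] p.1).sum
        = x ⊗ₜ[𝒜 0] (((m.map fun p => (⟨(p.1 : R) * (p.2 : R), by
            simpa using SetLike.mul_mem_graded p.1.2 p.2.2⟩ : 𝒜 0)).sum) • r) := by
    intro m x r
    induction m with
    | nil =>
      rw [List.map_nil, List.map_nil, List.sum_nil, List.sum_nil]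
      have h0 : ((0 : 𝒜 0) • r : 𝒜 k) = 0 := Subtype.ext (zero_mul (r : R))
      rw [h0, tmul_zero]
    | cons p t ih =>
      simp only [List.map_cons, List.sum_cons, ih, add_smul, tmul_add]
      congr 1
      have hc : ((p.2 : R) * (r : R)) ∈ 𝒜 0 := by
        simpa using SetLike.mul_mem_graded p.2.2 r.2
      have hx : (p.2 : R) • ((r : R) • x) = (⟨(p.2 : R) * (r : R), hc⟩ : 𝒜 0) • x := by
        rw [restrict_smul_def, smul_smul]
      rw [hx, smul_tmul]
      congr 1
      apply Subtype.ext
      rw [grade_smul_coe, grade_smul_coe]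
      ring
  let F : Q → Q ⊗[𝒜 0] 𝒜 k := fun x => (l.map fun p => ((p.2 : R) • x) ⊗ₜ[𝒜 0] p.1).sum
  have hgF : ∀ x : Q, g (F x) = x := by
    intro x
    show g ((l.map fun p => ((p.2 : R) • x) ⊗ₜ[𝒜 0] p.1).sum) = x
    rw [genG l x, hl]
    simp
  have hFg : ∀ t : Q ⊗[𝒜 0] 𝒜 k, F (g t) = t := by
    intro t
    induction t with
    | zero =>
      show (l.map fun p => ((p.2 : R) • (g 0)) ⊗ₜ[𝒜 0] p.1).sum = 0
      rw [map_zero]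
      simp
    | add a b iha ihb =>
      show (l.map fun p => ((p.2 : R) • (g (a + b))) ⊗ₜ[𝒜 0] p.1).sum = a + b
      rw [map_add, genAdd l]
      show F (g a) + F (g b) = a + b
      rw [iha, ihb]
    | tmul x r =>
      show (l.map fun p => ((p.2 : R) • (g (x ⊗ₜ r))) ⊗ₜ[𝒜 0] p.1).sum = x ⊗ₜ r
      rw [hg]
      exact (step l x r).trans (by rw [hl, one_smul])
  exact ⟨fun a b hab => by rw [← hFg a, ← hFg b, hab], fun x => ⟨F x, hgF x⟩⟩
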